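/- arXiv:2205.06852 — 2 statements merged into one kernel-verified Lean document; each statement's English description precedes it below -/
import Mathlib

section
/- Let f : M → M be a continuous map of a compact metric space M. Then f has the shadowing property if and only if every point of M is shadowable (i.e., for every y ∈ M and every ε > 0 there exists δ > 0 such that every δ-pseudo-orbit starting at y is ε-shadowed by a true orbit). -/
open Filter Topology

/-- Shadowing iff every point is shadowable (Lemma on shadowable points). -/
theorem shadowing_iff_every_point_shadowable
    {M : Type*} [MetricSpace M] [CompactSpace M]
    (f : M → M) (hf : Continuous f) :
    (∀ ε > (0 : ℝ), ∃ δ > (0 : ℝ), ∀ x : ℕ → M,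
        (∀ j, dist (f (x j)) (x (j + 1)) ≤ δ) →
        ∃ z : M, ∀ j, dist (f^[j] z) (x j) < ε)
    ↔
    (∀ y : M, ∀ ε > (0 : ℝ), ∃ δ > (0 : ℝ), ∀ x : ℕ → M, x 0 = y →
        (∀ j, dist (f (x j)) (x (j + 1)) ≤ δ) →
        ∃ z : M, ∀ j, dist (f^[j] z) (x j) < ε) := by
  constructor
  · intro h y ε hε
    obtain ⟨δ, hδ, H⟩ := h ε hε
    exact ⟨δ, hδ, fun x _ hx => H x hx⟩
  · intro h ε hε
    by_cases hM : Nonempty M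
    · choose δ' hδ'pos hδ' using fun y => h y (ε / 2) (half_pos hε)
      have hcont : ∀ y : M, ∃ r > 0, ∀ a, dist a y < r → dist (f a) (f y) < δ' y / 2 :=
        fun y => Metric.continuous_iff.mp hf y _ (by have := hδ'pos y; linarith)
      choose r hrpos hr using hcont
      set r' : M → ℝ := fun y => min (r y) (ε / 2) with hr'def
      have hr'pos : ∀ y, 0 < r' y := fun y => lt_min (hrpos y) (half_pos hε)
      have hcover : (Set.univ : Set M) ⊆ ⋃ y, Metric.ball y (r' y) := fun a _ =>
        Set.mem_iUnion.2 ⟨a, Metric.mem_ball_self (hr'pos a)⟩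
      obtain ⟨t, ht⟩ := isCompact_univ.elim_finite_subcover (fun y => Metric.ball y (r' y))
        (fun y => Metric.isOpen_ball) hcover
      have htne : t.Nonempty := by
        obtain ⟨a⟩ := hM
        obtain ⟨y, hy, _⟩ := Set.mem_iUnion₂.1 (ht (Set.mem_univ a))
        exact ⟨y, hy⟩
      refine ⟨t.inf' htne (fun y => δ' y / 2), ?_, ?_⟩
      · exact (Finset.lt_inf'_iff htne).2 fun y _ => by have := hδ'pos y; linarith
      · intro x hx
        obtain ⟨y, hy, hxy⟩ := Set.mem_iUnion₂.1 (ht (Set.mem_univ (x 0)))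
        have hδle : t.inf' htne (fun y => δ' y / 2) ≤ δ' y / 2 := Finset.inf'_le _ hy
        have hx0y : dist (x 0) y < r' y := Metric.mem_ball.1 hxy
        set x' : ℕ → M := fun j => if j = 0 then y else x j with hx'def
        have hpseudo : ∀ j, dist (f (x' j)) (x' (j + 1)) ≤ δ' y := by
          intro j
          cases j with
          | zero =>
            have h1 : dist (f (x 0)) (f y) < δ' y / 2 :=
              hr y (x 0) (lt_of_lt_of_le hx0y (min_le_left _ _))
            have h2 : dist (f (x 0)) (x 1) ≤ δ' y / 2 := le_trans (hx 0) hδle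
            have := dist_triangle (f y) (f (x 0)) (x 1)
            have hx'0 : x' 0 = y := rfl
            have hx'1 : x' 1 = x 1 := rfl
            rw [hx'0, hx'1]
            rw [dist_comm] at h1
            linarith
          | succ n =>
            have hx'n : x' (n + 1) = x (n + 1) := rfl
            have hx'n2 : x' (n + 2) = x (n + 2) := rfl
            rw [hx'n, hx'n2]
            exact le_trans (hx (n + 1)) (le_trans hδle (by have := hδ'pos y; linarith))
        obtain ⟨z, hz⟩ := hδ' y x' rfl hpseudo
        refine ⟨z, fun j => ?_⟩
        cases j with
        | zero =>
          have h1 : dist (f^[0] z) y < ε / 2 := hz 0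
          have h2 : dist (x 0) y < ε / 2 := lt_of_lt_of_le hx0y (min_le_right _ _)
          have := dist_triangle (f^[0] z) y (x 0)
          rw [dist_comm (x 0) y] at h2
          linarith
        | succ n =>
          have : x' (n + 1) = x (n + 1) := rfl
          have := hz (n + 1)
          rw [show x' (n + 1) = x (n + 1) from rfl] at this
          linarith [half_pos hε]
    · exact ⟨1, one_pos, fun x _ => absurd ⟨x 0⟩ hM⟩
end

section
/- If every point of a compact metric space M is shadowable for a continuous map f : M → M, then there is a uniform choice: for every ε > 0 there exists δ > 0 (independent of the starting point) such that every δ-pseudo-orbit of f is ε-shadowed. -/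
open Filter Topology

/-- If every point is shadowable then the choice of δ can be made uniform. -/
theorem uniform_shadowing_of_pointwise_shadowable
    {M : Type*} [MetricSpace M] [CompactSpace M]
    (f : M → M) (hf : Continuous f)
    (h : ∀ y : M, ∀ ε > (0 : ℝ), ∃ δ > (0 : ℝ), ∀ x : ℕ → M, x 0 = y →
        (∀ j, dist (f (x j)) (x (j + 1)) ≤ δ) →
        ∃ z : M, ∀ j, dist (f^[j] z) (x j) < ε) :
    ∀ ε > (0 : ℝ), ∃ δ > (0 : ℝ), ∀ x : ℕ → M,
      (∀ j, dist (f (x j)) (x (j + 1)) ≤ δ) →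
      ∃ z : M, ∀ j, dist (f^[j] z) (x j) < ε := by
  intro ε hε
  by_cases hM : Nonempty M
  case neg => exact ⟨1, one_pos, fun x _ => absurd ⟨x 0⟩ hM⟩
  obtain ⟨m⟩ := hM
  have key : ∀ w : M, ∃ d > (0:ℝ), ∃ ρ > (0:ℝ),
      (∀ x : ℕ → M, x 0 = w → (∀ j, dist (f (x j)) (x (j+1)) ≤ d) →
        ∃ z, ∀ j, dist (f^[j] z) (x j) < ε/2) ∧
      ∀ a : M, dist a w < ρ → dist (f a) (f w) < d/2 := by
    intro w
    obtain ⟨d, hd, hsh⟩ := h w (ε/2) (by linarith)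
    obtain ⟨ρ, hρ, hcont⟩ :=
      Metric.continuousAt_iff.1 (hf.continuousAt (x := w)) (d/2) (by linarith)
    exact ⟨d, hd, ρ, hρ, hsh, fun a ha => hcont ha⟩
  choose dw hdw ρ hρ hsh hcont using key
  set r : M → ℝ := fun w => min (ε/2) (ρ w) with hr
  have hrpos : ∀ w, 0 < r w := fun w => lt_min (by linarith) (hρ w)
  obtain ⟨t, ht⟩ := isCompact_univ.elim_finite_subcover (fun w => Metric.ball w (r w))
    (fun w => Metric.isOpen_ball)
    (fun x _ => Set.mem_iUnion.2 ⟨x, Metric.mem_ball_self (hrpos x)⟩)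
  have htne : t.Nonempty := by
    obtain ⟨w, hw⟩ := Set.mem_iUnion₂.1 (ht (Set.mem_univ m))
    exact ⟨w, hw.1⟩
  set δ : ℝ := t.inf' htne (fun w => dw w / 2) with hδ
  have hδpos : 0 < δ := by
    rw [hδ, Finset.lt_inf'_iff]
    exact fun w _ => by linarith [hdw w]
  refine ⟨δ, hδpos, fun x hx => ?_⟩
  obtain ⟨w, hwt, hxw⟩ := Set.mem_iUnion₂.1 (ht (Set.mem_univ (x 0)))
  rw [Metric.mem_ball] at hxw
  have hδle : δ ≤ dw w / 2 := Finset.inf'_le _ hwt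
  set y : ℕ → M := fun j => if j = 0 then w else x j with hy
  have hy0 : y 0 = w := rfl
  have hyp : ∀ j, dist (f (y j)) (y (j+1)) ≤ dw w := by
    intro j
    cases j with
    | zero =>
      have h1 : dist (f (x 0)) (f w) < dw w / 2 :=
        hcont w (x 0) (hxw.trans_le (min_le_right _ _))
      have h2 : dist (f w) (x 1) ≤ dist (f w) (f (x 0)) + dist (f (x 0)) (x 1) :=
        dist_triangle _ _ _
      have h3 := hx 0
      simp only [hy]
      rw [dist_comm] at h1
      norm_num
      linarith
    | succ n =>
      simp only [hy]
      norm_num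
      exact (hx (n+1)).trans (by linarith)
  obtain ⟨z, hz⟩ := hsh w y hy0 hyp
  refine ⟨z, fun j => ?_⟩
  cases j with
  | zero =>
    have h0 := hz 0
    simp only [hy, Function.iterate_zero, id_eq, if_pos rfl] at h0 ⊢
    calc dist z (x 0) ≤ dist z w + dist w (x 0) := dist_triangle _ _ _
      _ < ε/2 + ε/2 := by
          rw [dist_comm w (x 0)]
          exact add_lt_add h0 (hxw.trans_le (min_le_left _ _))
      _ = ε := by ring
  | succ n =>
    have := hz (n+1)
    simp only [hy, if_neg (Nat.succ_ne_zero n)] at this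
    exact this.trans (by linarith)
end
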